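/- arXiv:2007.07692 — 8 statements merged into one kernel-verified Lean document; each statement's English description precedes it below -/
import Mathlib

section
/- Exchanging the two variables exchanges T_• and T_∘: for all natural numbers a, b, the coefficient of z_•^a·z_∘^b in T_• equals the coefficient of z_•^b·z_∘^a in T_∘. -/
open MvPowerSeries Finsupp

private lemma deg_add (u v : Fin 2 →₀ ℕ) : (u + v).degree = u.degree + v.degree := by
  simp [Finsupp.degree_eq_weight_one, map_add]

private lemma mul_coeff_congr {A B A' B' : MvPowerSeries (Fin 2) ℚ}
    (hA0 : MvPowerSeries.coeff 0 A = 0) (hB0 : MvPowerSeries.coeff 0 B = 0)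
    (hA'0 : MvPowerSeries.coeff 0 A' = 0) (hB'0 : MvPowerSeries.coeff 0 B' = 0)
    (d : Fin 2 →₀ ℕ)
    (hA : ∀ e : Fin 2 →₀ ℕ, e.degree < d.degree → MvPowerSeries.coeff e A = MvPowerSeries.coeff e A')
    (hB : ∀ e : Fin 2 →₀ ℕ, e.degree < d.degree → MvPowerSeries.coeff e B = MvPowerSeries.coeff e B') :
    MvPowerSeries.coeff d (A * B) = MvPowerSeries.coeff d (A' * B') := by
  classical
  rw [MvPowerSeries.coeff_mul, MvPowerSeries.coeff_mul]
  refine Finset.sum_congr rfl fun p hp => ?_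
  rw [Finset.HasAntidiagonal.mem_antidiagonal] at hp
  by_cases h1 : p.1 = 0
  · rw [h1, hA0, hA'0, zero_mul, zero_mul]
  by_cases h2 : p.2 = 0
  · rw [h2, hB0, hB'0, mul_zero, mul_zero]
  have hd : p.1.degree + p.2.degree = d.degree := by rw [← hp, deg_add]
  have n1 : p.1.degree ≠ 0 := by
    rw [Ne, Finsupp.degree_eq_zero_iff]; exact h1
  have n2 : p.2.degree ≠ 0 := by
    rw [Ne, Finsupp.degree_eq_zero_iff]; exact h2
  rw [hA _ (by omega), hB _ (by omega)]

private lemma tree_uniq (Tb To Tb' To' : MvPowerSeries (Fin 2) ℚ)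
    (hTb0 : MvPowerSeries.coeff 0 Tb = 0) (hTo0 : MvPowerSeries.coeff 0 To = 0)
    (hTb'0 : MvPowerSeries.coeff 0 Tb' = 0) (hTo'0 : MvPowerSeries.coeff 0 To' = 0)
    (hTb : Tb = MvPowerSeries.X 0 + Tb ^ 2 + 2 * To * Tb)
    (hTo : To = MvPowerSeries.X 1 + To ^ 2 + 2 * To * Tb)
    (hTb' : Tb' = MvPowerSeries.X 0 + Tb' ^ 2 + 2 * To' * Tb')
    (hTo' : To' = MvPowerSeries.X 1 + To' ^ 2 + 2 * To' * Tb') :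
    Tb = Tb' ∧ To = To' := by
  have e2 : (MvPowerSeries.X 0 : MvPowerSeries (Fin 2) ℚ) + Tb ^ 2 + 2 * To * Tb
      = MvPowerSeries.X 0 + Tb * Tb + (To * Tb + To * Tb) := by ring
  have e2' : (MvPowerSeries.X 0 : MvPowerSeries (Fin 2) ℚ) + Tb' ^ 2 + 2 * To' * Tb'
      = MvPowerSeries.X 0 + Tb' * Tb' + (To' * Tb' + To' * Tb') := by ring
  have e3 : (MvPowerSeries.X 1 : MvPowerSeries (Fin 2) ℚ) + To ^ 2 + 2 * To * Tb
      = MvPowerSeries.X 1 + To * To + (To * Tb + To * Tb) := by ring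
  have e3' : (MvPowerSeries.X 1 : MvPowerSeries (Fin 2) ℚ) + To' ^ 2 + 2 * To' * Tb'
      = MvPowerSeries.X 1 + To' * To' + (To' * Tb' + To' * Tb') := by ring
  rw [e2] at hTb; rw [e2'] at hTb'; rw [e3] at hTo; rw [e3'] at hTo'
  have key : ∀ n : ℕ, ∀ d : Fin 2 →₀ ℕ, d.degree = n →
      MvPowerSeries.coeff d Tb = MvPowerSeries.coeff d Tb' ∧
      MvPowerSeries.coeff d To = MvPowerSeries.coeff d To' := by
    intro n
    induction n using Nat.strong_induction_on with
    | _ n ih =>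
      intro d hd
      have IHb : ∀ e : Fin 2 →₀ ℕ, e.degree < d.degree →
          MvPowerSeries.coeff e Tb = MvPowerSeries.coeff e Tb' :=
        fun e he => (ih e.degree (hd ▸ he) e rfl).1
      have IHo : ∀ e : Fin 2 →₀ ℕ, e.degree < d.degree →
          MvPowerSeries.coeff e To = MvPowerSeries.coeff e To' :=
        fun e he => (ih e.degree (hd ▸ he) e rfl).2
      constructor
      · conv_lhs => rw [hTb]
        conv_rhs => rw [hTb']
        simp only [map_add]
        rw [mul_coeff_congr hTb0 hTb0 hTb'0 hTb'0 d IHb IHb,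
          mul_coeff_congr hTo0 hTb0 hTo'0 hTb'0 d IHo IHb]
      · conv_lhs => rw [hTo]
        conv_rhs => rw [hTo']
        simp only [map_add]
        rw [mul_coeff_congr hTo0 hTo0 hTo'0 hTo'0 d IHo IHo,
          mul_coeff_congr hTo0 hTb0 hTo'0 hTb'0 d IHo IHb]
  constructor
  · exact MvPowerSeries.ext fun d => (key d.degree d rfl).1
  · exact MvPowerSeries.ext fun d => (key d.degree d rfl).2

/-- swap of exponents -/
private noncomputable def swapE : (Fin 2 →₀ ℕ) ≃+ (Fin 2 →₀ ℕ) :=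
  Finsupp.domCongr (Equiv.swap 0 1)

private lemma swapE_swapE (x : Fin 2 →₀ ℕ) : swapE (swapE x) = x := by
  ext i
  simp [swapE, Finsupp.equivMapDomain_apply, Equiv.swap_apply_self]

/-- swap of variables on power series -/
private noncomputable def swapF (f : MvPowerSeries (Fin 2) ℚ) : MvPowerSeries (Fin 2) ℚ :=
  fun d => f (swapE d)

private lemma coeff_swapF (f : MvPowerSeries (Fin 2) ℚ) (d : Fin 2 →₀ ℕ) :
    MvPowerSeries.coeff d (swapF f) = MvPowerSeries.coeff (swapE d) f := rfl

private lemma swapF_add (f g : MvPowerSeries (Fin 2) ℚ) :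
    swapF (f + g) = swapF f + swapF g := rfl

private lemma swapF_mul (f g : MvPowerSeries (Fin 2) ℚ) :
    swapF (f * g) = swapF f * swapF g := by
  classical
  apply MvPowerSeries.ext
  intro d
  rw [MvPowerSeries.coeff_mul, coeff_swapF, MvPowerSeries.coeff_mul]
  refine Finset.sum_nbij' (fun p => (swapE p.1, swapE p.2))
    (fun p => (swapE p.1, swapE p.2)) ?_ ?_ ?_ ?_ ?_
  · intro p hp
    rw [Finset.HasAntidiagonal.mem_antidiagonal] at hp ⊢
    rw [← map_add, hp, swapE_swapE]
  · intro p hp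
    rw [Finset.HasAntidiagonal.mem_antidiagonal] at hp ⊢
    rw [← map_add, hp]
  · intro p _
    simp [swapE_swapE, Prod.ext_iff]
  · intro p _
    simp [swapE_swapE, Prod.ext_iff]
  · intro p _
    rw [coeff_swapF, coeff_swapF, swapE_swapE, swapE_swapE]

private lemma swapE_single (i : Fin 2) (n : ℕ) :
    swapE (Finsupp.single i n) = Finsupp.single (Equiv.swap (0 : Fin 2) 1 i) n :=
  Finsupp.equivMapDomain_single _ _ _

private lemma swapF_X (i : Fin 2) :
    swapF (MvPowerSeries.X i) = MvPowerSeries.X (Equiv.swap (0 : Fin 2) 1 i) := by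
  classical
  apply MvPowerSeries.ext
  intro d
  rw [coeff_swapF, MvPowerSeries.coeff_X, MvPowerSeries.coeff_X]
  congr 1
  have : (Finsupp.single i 1 : Fin 2 →₀ ℕ) = swapE (Finsupp.single (Equiv.swap (0:Fin 2) 1 i) 1) := by
    rw [swapE_single, Equiv.swap_apply_self]
  rw [this]
  simp [EmbeddingLike.apply_eq_iff_eq]

/-- Exchanging the two variables exchanges `T_•` and `T_∘`: the coefficient of
`z_•^a·z_∘^b` in `T_•` equals the coefficient of `z_•^b·z_∘^a` in `T_∘`. -/
theorem bivariate_tree_series_swap_symm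
    (Tb To : MvPowerSeries (Fin 2) ℚ)
    (hTb0 : MvPowerSeries.constantCoeff Tb = 0)
    (hTo0 : MvPowerSeries.constantCoeff To = 0)
    (hTb : Tb = MvPowerSeries.X 0 + Tb ^ 2 + 2 * To * Tb)
    (hTo : To = MvPowerSeries.X 1 + To ^ 2 + 2 * To * Tb) :
    ∀ a b : ℕ,
      MvPowerSeries.coeff (Finsupp.single (0 : Fin 2) a + Finsupp.single 1 b) Tb =
      MvPowerSeries.coeff (Finsupp.single (0 : Fin 2) b + Finsupp.single 1 a) To := by
  classical
  set Tb' := swapF To with hTb'def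
  set To' := swapF Tb with hTo'def
  have hswap0 : ∀ f : MvPowerSeries (Fin 2) ℚ,
      MvPowerSeries.coeff 0 (swapF f) = MvPowerSeries.coeff 0 f := by
    intro f; rw [coeff_swapF, map_zero]
  have hTb'0 : MvPowerSeries.coeff 0 Tb' = 0 := by
    rw [hTb'def, hswap0, MvPowerSeries.coeff_zero_eq_constantCoeff, hTo0]
  have hTo'0 : MvPowerSeries.coeff 0 To' = 0 := by
    rw [hTo'def, hswap0, MvPowerSeries.coeff_zero_eq_constantCoeff, hTb0]
  -- the swapped pair satisfies the same system
  have hTbr : Tb = MvPowerSeries.X 0 + Tb * Tb + (To * Tb + To * Tb) := by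
    conv_lhs => rw [hTb]
    ring
  have hTor : To = MvPowerSeries.X 1 + To * To + (To * Tb + To * Tb) := by
    conv_lhs => rw [hTo]
    ring
  have hTb' : Tb' = MvPowerSeries.X 0 + Tb' ^ 2 + 2 * To' * Tb' := by
    have h := congrArg swapF hTor
    simp only [swapF_add, swapF_mul, swapF_X] at h
    refine h.trans ?_
    rw [show (Equiv.swap (0 : Fin 2) 1) 1 = 0 from Equiv.swap_apply_right 0 1,
      ← hTb'def, ← hTo'def]
    ring
  have hTo' : To' = MvPowerSeries.X 1 + To' ^ 2 + 2 * To' * Tb' := by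
    have h := congrArg swapF hTbr
    simp only [swapF_add, swapF_mul, swapF_X] at h
    refine h.trans ?_
    rw [show (Equiv.swap (0 : Fin 2) 1) 0 = 1 from Equiv.swap_apply_left 0 1,
      ← hTb'def, ← hTo'def]
    ring
  have hb0 : MvPowerSeries.coeff 0 Tb = 0 := by
    rw [MvPowerSeries.coeff_zero_eq_constantCoeff, hTb0]
  have ho0 : MvPowerSeries.coeff 0 To = 0 := by
    rw [MvPowerSeries.coeff_zero_eq_constantCoeff, hTo0]
  obtain ⟨hb, _⟩ := tree_uniq Tb To Tb' To' hb0 ho0 hTb'0 hTo'0 hTb hTo hTb' hTo'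
  intro a b
  rw [hb, hTb'def, coeff_swapF]
  congr 1
  rw [map_add, swapE_single, swapE_single, Equiv.swap_apply_left, Equiv.swap_apply_right,
    add_comm]
end

section
/- There exists a unique pair (D_•, D_∘) of formal power series in ℚ⟦t_•, t_∘⟧, both with constant coefficient 0, satisfying the system D_• = t_• + 2·(t_•+t_∘)·D_• + t_•·D_∘·D_• and D_∘ = t_∘ + 2·(t_•+t_∘)·D_∘ + t_∘·D_•·D_∘. -/
open MvPowerSeries Finset

namespace MotzkinAux

abbrev PS : Type := MvPowerSeries (Fin 2) ℚ

noncomputable def F (P : PS × PS) : PS × PS :=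
  (X 0 + 2 * (X 0 + X 1) * P.1 + X 0 * P.2 * P.1,
   X 1 + 2 * (X 0 + X 1) * P.2 + X 1 * P.1 * P.2)

def deg (m : Fin 2 →₀ ℕ) : ℕ := m.sum fun _ n => n

lemma deg_add (x y : Fin 2 →₀ ℕ) : deg (x + y) = deg x + deg y :=
  Finsupp.sum_add_index' (fun _ => rfl) (fun _ _ _ => rfl)

lemma deg_zero : deg (0 : Fin 2 →₀ ℕ) = 0 := Finsupp.sum_zero_index

lemma one_le_deg {x : Fin 2 →₀ ℕ} (hx : x ≠ 0) : 1 ≤ deg x := by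
  obtain ⟨i, hi⟩ := Finsupp.ne_iff.mp hx
  rw [Finsupp.coe_zero, Pi.zero_apply] at hi
  calc 1 ≤ x i := Nat.one_le_iff_ne_zero.mpr hi
    _ ≤ deg x := Finset.single_le_sum (fun _ _ => Nat.zero_le _)
        (Finsupp.mem_support_iff.mpr hi)

lemma coeff_mul_low {a E : PS} (ha : constantCoeff a = 0) {d : ℕ}
    (hE : ∀ b, deg b < d → coeff b E = 0) {m : Fin 2 →₀ ℕ} (hm : deg m ≤ d) :
    coeff m (a * E) = 0 := by
  rw [coeff_mul]
  apply Finset.sum_eq_zero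
  rintro ⟨x, y⟩ hxy
  rw [HasAntidiagonal.mem_antidiagonal] at hxy
  by_cases hx : x = 0
  · subst hx
    rw [coeff_zero_eq_constantCoeff_apply, ha, zero_mul]
  · have h1 : 1 ≤ deg x := one_le_deg hx
    have h2 : deg x + deg y = deg m := by rw [← deg_add, hxy]
    have h3 : deg y < d := by omega
    rw [hE y h3, mul_zero]

lemma key {P Q : PS × PS} {d : ℕ}
    (h : ∀ b, deg b < d → coeff b P.1 = coeff b Q.1 ∧ coeff b P.2 = coeff b Q.2)
    {m : Fin 2 →₀ ℕ} (hm : deg m ≤ d) :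
    coeff m (F P).1 = coeff m (F Q).1 ∧ coeff m (F P).2 = coeff m (F Q).2 := by
  have hE1 : ∀ b, deg b < d → coeff b (P.1 - Q.1) = 0 := fun b hb => by
    rw [map_sub, (h b hb).1, sub_self]
  have hE2 : ∀ b, deg b < d → coeff b (P.2 - Q.2) = 0 := fun b hb => by
    rw [map_sub, (h b hb).2, sub_self]
  constructor
  · rw [← sub_eq_zero, ← map_sub]
    have hring : (F P).1 - (F Q).1 =
        (2 * (X 0 + X 1) + X 0 * P.2) * (P.1 - Q.1) + (X 0 * Q.1) * (P.2 - Q.2) := by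
      simp only [F]; ring
    have hA : constantCoeff (2 * (X 0 + X 1) + X 0 * P.2) = 0 := by
      simp [map_add, map_mul, constantCoeff_X]
    have hB : constantCoeff ((X 0 : PS) * Q.1) = 0 := by
      simp [map_mul, constantCoeff_X]
    rw [hring, map_add, coeff_mul_low hA hE1 hm, coeff_mul_low hB hE2 hm, add_zero]
  · rw [← sub_eq_zero, ← map_sub]
    have hring : (F P).2 - (F Q).2 =
        (2 * (X 0 + X 1) + X 1 * P.1) * (P.2 - Q.2) + (X 1 * Q.2) * (P.1 - Q.1) := by
      simp only [F]; ring
    have hA : constantCoeff (2 * (X 0 + X 1) + X 1 * P.1) = 0 := by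
      simp [map_add, map_mul, constantCoeff_X]
    have hB : constantCoeff ((X 1 : PS) * Q.2) = 0 := by
      simp [map_mul, constantCoeff_X]
    rw [hring, map_add, coeff_mul_low hA hE2 hm, coeff_mul_low hB hE1 hm, add_zero]

noncomputable def seq : ℕ → PS × PS
  | 0 => (0, 0)
  | n + 1 => F (seq n)

lemma agree (n : ℕ) : ∀ m, deg m < n →
    coeff m (seq n).1 = coeff m (seq (n + 1)).1 ∧
    coeff m (seq n).2 = coeff m (seq (n + 1)).2 := by
  induction n with
  | zero => intro m hm; omega
  | succ n ih =>
    intro m hm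
    show coeff m (F (seq n)).1 = coeff m (F (seq (n + 1))).1 ∧
      coeff m (F (seq n)).2 = coeff m (F (seq (n + 1))).2
    exact key ih (Nat.lt_succ_iff.mp hm)

lemma eventual (m : Fin 2 →₀ ℕ) : ∀ n, deg m < n →
    coeff m (seq n).1 = coeff m (seq (deg m + 1)).1 ∧
    coeff m (seq n).2 = coeff m (seq (deg m + 1)).2 := by
  intro n
  induction n with
  | zero => intro hm; omega
  | succ n ih =>
    intro hm
    rcases Nat.lt_or_ge (deg m) n with h | h
    · exact ⟨by rw [← (agree n m h).1]; exact (ih h).1,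
        by rw [← (agree n m h).2]; exact (ih h).2⟩
    · have : n = deg m := by omega
      subst this
      exact ⟨rfl, rfl⟩

noncomputable def D1 : PS := fun m => coeff m (seq (deg m + 1)).1
noncomputable def D2 : PS := fun m => coeff m (seq (deg m + 1)).2

lemma coeffD1 (m : Fin 2 →₀ ℕ) {n : ℕ} (h : deg m < n) :
    coeff m D1 = coeff m (seq n).1 := by
  rw [coeff_apply]; exact ((eventual m n h).1).symm

lemma coeffD2 (m : Fin 2 →₀ ℕ) {n : ℕ} (h : deg m < n) :
    coeff m D2 = coeff m (seq n).2 := by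
  rw [coeff_apply]; exact ((eventual m n h).2).symm

lemma fixed : (D1, D2) = F (D1, D2) := by
  have hmain : ∀ m : Fin 2 →₀ ℕ,
      coeff m (F (D1, D2)).1 = coeff m D1 ∧
      coeff m (F (D1, D2)).2 = coeff m D2 := by
    intro m
    have h : ∀ b, deg b < deg m →
        coeff b (D1, D2).1 = coeff b (seq (deg m)).1 ∧
        coeff b (D1, D2).2 = coeff b (seq (deg m)).2 :=
      fun b hb => ⟨coeffD1 b hb, coeffD2 b hb⟩
    have hk := key h (le_refl (deg m))
    have hs1 : (F (seq (deg m))).1 = (seq (deg m + 1)).1 := rfl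
    have hs2 : (F (seq (deg m))).2 = (seq (deg m + 1)).2 := rfl
    constructor
    · rw [hk.1, hs1, coeffD1 m (Nat.lt_succ_self _)]
    · rw [hk.2, hs2, coeffD2 m (Nat.lt_succ_self _)]
  exact Prod.ext (MvPowerSeries.ext fun m => ((hmain m).1).symm)
    (MvPowerSeries.ext fun m => ((hmain m).2).symm)

lemma constD1 : constantCoeff D1 = 0 := by
  rw [← coeff_zero_eq_constantCoeff_apply, coeffD1 0 (n := 1) (by rw [deg_zero]; omega)]
  show coeff 0 (F (0, 0)).1 = 0
  simp [F, coeff_zero_eq_constantCoeff_apply, map_add, map_mul, constantCoeff_X]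

lemma constD2 : constantCoeff D2 = 0 := by
  rw [← coeff_zero_eq_constantCoeff_apply, coeffD2 0 (n := 1) (by rw [deg_zero]; omega)]
  show coeff 0 (F (0, 0)).2 = 0
  simp [F, coeff_zero_eq_constantCoeff_apply, map_add, map_mul, constantCoeff_X]

end MotzkinAux

/-- There exists a unique pair `(D_•, D_∘)` of formal power series in `ℚ⟦t_•, t_∘⟧`,
both with constant coefficient `0`, satisfying
`D_• = t_• + 2·(t_•+t_∘)·D_• + t_•·D_∘·D_•` and
`D_∘ = t_∘ + 2·(t_•+t_∘)·D_∘ + t_∘·D_•·D_∘`. -/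
theorem unique_primitive_motzkin_series :
    ∃! P : MvPowerSeries (Fin 2) ℚ × MvPowerSeries (Fin 2) ℚ,
      MvPowerSeries.constantCoeff P.1 = 0 ∧
      MvPowerSeries.constantCoeff P.2 = 0 ∧
      P.1 = MvPowerSeries.X 0 + 2 * (MvPowerSeries.X 0 + MvPowerSeries.X 1) * P.1 +
        MvPowerSeries.X 0 * P.2 * P.1 ∧
      P.2 = MvPowerSeries.X 1 + 2 * (MvPowerSeries.X 0 + MvPowerSeries.X 1) * P.2 +
        MvPowerSeries.X 1 * P.1 * P.2 := by
  open MotzkinAux in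
  refine ⟨(D1, D2), ⟨constD1, constD2, ?_, ?_⟩, ?_⟩
  · exact congrArg Prod.fst fixed
  · exact congrArg Prod.snd fixed
  · rintro Q ⟨-, -, he1, he2⟩
    have hQ : Q = MotzkinAux.F Q := Prod.ext he1 he2
    have hall : ∀ n, ∀ m, MotzkinAux.deg m < n →
        MvPowerSeries.coeff m Q.1 = MvPowerSeries.coeff m D1 ∧
        MvPowerSeries.coeff m Q.2 = MvPowerSeries.coeff m D2 := by
      intro n
      induction n with
      | zero => intro m hm; omega
      | succ n ih =>
        intro m hm
        have h := MotzkinAux.key (P := Q) (Q := (D1, D2)) ih (Nat.lt_succ_iff.mp hm)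
        rw [← hQ, ← fixed] at h
        exact h
    exact Prod.ext
      (MvPowerSeries.ext fun m => (hall (MotzkinAux.deg m + 1) m (Nat.lt_succ_self _)).1)
      (MvPowerSeries.ext fun m => (hall (MotzkinAux.deg m + 1) m (Nat.lt_succ_self _)).2)
end

section
/- The identity t_∘ · D_• = t_• · D_∘ holds in ℚ⟦t_•, t_∘⟧. -/
/-- The identity `t_∘ · D_• = t_• · D_∘` holds in `ℚ⟦t_•, t_∘⟧`. -/
theorem motzkin_series_cross_identity
    (Db Do : MvPowerSeries (Fin 2) ℚ)
    (hDb0 : MvPowerSeries.constantCoeff Db = 0)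
    (hDo0 : MvPowerSeries.constantCoeff Do = 0)
    (hDb : Db = MvPowerSeries.X 0 + 2 * (MvPowerSeries.X 0 + MvPowerSeries.X 1) * Db +
      MvPowerSeries.X 0 * Do * Db)
    (hDo : Do = MvPowerSeries.X 1 + 2 * (MvPowerSeries.X 0 + MvPowerSeries.X 1) * Do +
      MvPowerSeries.X 1 * Db * Do) :
    MvPowerSeries.X 1 * Db = MvPowerSeries.X 0 * Do := by
  have key : (1 - 2 * (MvPowerSeries.X 0 + MvPowerSeries.X 1)) *
      (MvPowerSeries.X 1 * Db - MvPowerSeries.X 0 * Do) = 0 := by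
    linear_combination (MvPowerSeries.X (σ := Fin 2) (R := ℚ) 1) * hDb -
      (MvPowerSeries.X (σ := Fin 2) (R := ℚ) 0) * hDo
  have hu : IsUnit (1 - 2 * (MvPowerSeries.X (σ := Fin 2) (R := ℚ) 0 + MvPowerSeries.X 1)) := by
    rw [MvPowerSeries.isUnit_iff_constantCoeff]
    simp
  have h0 := (hu.mul_right_eq_zero).mp key
  exact sub_eq_zero.mp h0
end

section
/- The series B is symmetric in its two variables: for all natural numbers a, b, the coefficient of t_•^a·t_∘^b in B equals the coefficient of t_•^b·t_∘^a in B. -/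
open MvPowerSeries

noncomputable def sw : (Fin 2 →₀ ℕ) ≃+ (Fin 2 →₀ ℕ) := Finsupp.domCongr (Equiv.swap 0 1)

lemma sw_single (i : Fin 2) (n : ℕ) :
    sw (Finsupp.single i n) = Finsupp.single (Equiv.swap (0:Fin 2) 1 i) n := by
  simp [sw, Finsupp.domCongr_apply, Finsupp.equivMapDomain_single]

noncomputable def Sfun (f : MvPowerSeries (Fin 2) ℚ) : MvPowerSeries (Fin 2) ℚ :=
  fun m => f (sw m)

lemma coeff_Sfun (f : MvPowerSeries (Fin 2) ℚ) (m : Fin 2 →₀ ℕ) :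
    MvPowerSeries.coeff (R := ℚ) m (Sfun f) = MvPowerSeries.coeff (R := ℚ) (sw m) f := rfl

lemma Sfun_one : Sfun 1 = 1 := by
  ext m
  classical
  rw [coeff_Sfun, MvPowerSeries.coeff_one, MvPowerSeries.coeff_one]
  simp [map_eq_zero_iff sw sw.injective]

lemma Sfun_mul (f g : MvPowerSeries (Fin 2) ℚ) : Sfun (f * g) = Sfun f * Sfun g := by
  ext m
  classical
  rw [coeff_Sfun, MvPowerSeries.coeff_mul, MvPowerSeries.coeff_mul]
  refine Finset.sum_nbij' (fun p => (sw.symm p.1, sw.symm p.2)) (fun p => (sw p.1, sw p.2)) ?_ ?_ ?_ ?_ ?_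
  · intro p hp
    rw [Finset.HasAntidiagonal.mem_antidiagonal] at hp ⊢
    apply sw.injective
    simp [hp]
  · intro p hp
    rw [Finset.HasAntidiagonal.mem_antidiagonal] at hp ⊢
    rw [← map_add, hp]
  · intro p _; simp
  · intro p _; simp
  · intro p _
    rw [coeff_Sfun, coeff_Sfun]
    simp

noncomputable def S : MvPowerSeries (Fin 2) ℚ →+* MvPowerSeries (Fin 2) ℚ where
  toFun := Sfun
  map_one' := Sfun_one
  map_mul' := Sfun_mul
  map_zero' := rfl
  map_add' := fun f g => rfl

lemma coeff_S (f : MvPowerSeries (Fin 2) ℚ) (m : Fin 2 →₀ ℕ) :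
    MvPowerSeries.coeff (R := ℚ) m (S f) = MvPowerSeries.coeff (R := ℚ) (sw m) f := rfl

lemma S_X0 : S (MvPowerSeries.X 0) = MvPowerSeries.X 1 := by
  ext m
  classical
  rw [coeff_S, MvPowerSeries.coeff_X, MvPowerSeries.coeff_X]
  congr 1
  simp only [eq_iff_iff]
  constructor
  · intro h
    apply sw.injective
    rw [h, sw_single]; simp
  · intro h; rw [h, sw_single]; simp

lemma S_X1 : S (MvPowerSeries.X 1) = MvPowerSeries.X 0 := by
  ext m
  classical
  rw [coeff_S, MvPowerSeries.coeff_X, MvPowerSeries.coeff_X]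
  congr 1
  simp only [eq_iff_iff]
  constructor
  · intro h
    apply sw.injective
    rw [h, sw_single]; simp
  · intro h; rw [h, sw_single]; simp

lemma uniq_pair (u v A B C D : MvPowerSeries (Fin 2) ℚ)
    (hA : MvPowerSeries.constantCoeff (σ := Fin 2) (R := ℚ) A = 0)
    (hB : MvPowerSeries.constantCoeff (σ := Fin 2) (R := ℚ) B = 0)
    (hC : MvPowerSeries.constantCoeff (σ := Fin 2) (R := ℚ) C = 0)
    (hD : MvPowerSeries.constantCoeff (σ := Fin 2) (R := ℚ) D = 0)
    (hu : u = A * u + B * v) (hv : v = C * u + D * v) : u = 0 ∧ v = 0 := by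
  classical
  have key : ∀ n : ℕ, ∀ m : Fin 2 →₀ ℕ, m 0 + m 1 = n →
      MvPowerSeries.coeff (R := ℚ) m u = 0 ∧ MvPowerSeries.coeff (R := ℚ) m v = 0 := by
    intro n
    induction n using Nat.strong_induction_on with
    | _ n ih =>
      intro m hm
      have step : ∀ P Q w₁ w₂ : MvPowerSeries (Fin 2) ℚ,
          MvPowerSeries.constantCoeff (σ := Fin 2) (R := ℚ) P = 0 →
          MvPowerSeries.constantCoeff (σ := Fin 2) (R := ℚ) Q = 0 →
          (∀ m' : Fin 2 →₀ ℕ, m' 0 + m' 1 < n → MvPowerSeries.coeff (R := ℚ) m' w₁ = 0) →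
          (∀ m' : Fin 2 →₀ ℕ, m' 0 + m' 1 < n → MvPowerSeries.coeff (R := ℚ) m' w₂ = 0) →
          MvPowerSeries.coeff (R := ℚ) m (P * w₁ + Q * w₂) = 0 := by
        intro P Q w₁ w₂ hP hQ h₁ h₂
        rw [map_add, MvPowerSeries.coeff_mul, MvPowerSeries.coeff_mul]
        have zsum : ∀ (R w : MvPowerSeries (Fin 2) ℚ),
            MvPowerSeries.constantCoeff (σ := Fin 2) (R := ℚ) R = 0 →
            (∀ m' : Fin 2 →₀ ℕ, m' 0 + m' 1 < n → MvPowerSeries.coeff (R := ℚ) m' w = 0) →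
            ∑ p ∈ Finset.HasAntidiagonal.antidiagonal m, MvPowerSeries.coeff (R := ℚ) p.1 R * MvPowerSeries.coeff (R := ℚ) p.2 w = 0 := by
          intro R w hR hw
          apply Finset.sum_eq_zero
          intro p hp
          rw [Finset.HasAntidiagonal.mem_antidiagonal] at hp
          rcases eq_or_ne p.1 0 with h0 | h0
          · rw [h0, MvPowerSeries.coeff_zero_eq_constantCoeff_apply, hR, zero_mul]
          · have hpos : 0 < p.1 0 + p.1 1 := by
              by_contra hc
              push_neg at hc
              apply h0
              ext i
              fin_cases i
              · show p.1 0 = 0; omega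
              · show p.1 1 = 0; omega
            have hlt : p.2 0 + p.2 1 < n := by
              have : (p.1 + p.2) 0 + (p.1 + p.2) 1 = n := by rw [hp, hm]
              simp only [Finsupp.add_apply] at this
              omega
            rw [hw p.2 hlt, mul_zero]
        rw [zsum P w₁ hP h₁, zsum Q w₂ hQ h₂, add_zero]
      have ihu : ∀ m' : Fin 2 →₀ ℕ, m' 0 + m' 1 < n → MvPowerSeries.coeff (R := ℚ) m' u = 0 :=
        fun m' h => (ih _ h m' rfl).1
      have ihv : ∀ m' : Fin 2 →₀ ℕ, m' 0 + m' 1 < n → MvPowerSeries.coeff (R := ℚ) m' v = 0 :=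
        fun m' h => (ih _ h m' rfl).2
      constructor
      · rw [hu]; exact step A B u v hA hB ihu ihv
      · rw [hv]; exact step C D u v hC hD ihu ihv
  constructor <;> ext m
  · exact (key _ m rfl).1
  · exact (key _ m rfl).2

/-- The Motzkin bridge series `B` is symmetric in its two variables: the coefficient of
`t_•^a·t_∘^b` in `B` equals the coefficient of `t_•^b·t_∘^a` in `B`. -/
theorem motzkin_bridge_series_symm
    (Db Do B : MvPowerSeries (Fin 2) ℚ)
    (hDb0 : MvPowerSeries.constantCoeff (σ := Fin 2) (R := ℚ) Db = 0)
    (hDo0 : MvPowerSeries.constantCoeff (σ := Fin 2) (R := ℚ) Do = 0)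
    (hDb : Db = MvPowerSeries.X 0 + 2 * (MvPowerSeries.X 0 + MvPowerSeries.X 1) * Db +
      MvPowerSeries.X 0 * Do * Db)
    (hDo : Do = MvPowerSeries.X 1 + 2 * (MvPowerSeries.X 0 + MvPowerSeries.X 1) * Do +
      MvPowerSeries.X 1 * Db * Do)
    (hB : B = 1 + 2 * (MvPowerSeries.X 0 + MvPowerSeries.X 1) * B +
      (MvPowerSeries.X 0 * Do + MvPowerSeries.X 1 * Db) * B) :
    ∀ a b : ℕ,
      MvPowerSeries.coeff (R := ℚ) (Finsupp.single (0 : Fin 2) a + Finsupp.single 1 b) B =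
      MvPowerSeries.coeff (R := ℚ) (Finsupp.single (0 : Fin 2) b + Finsupp.single 1 a) B := by
  classical
  have hX0 : MvPowerSeries.constantCoeff (σ := Fin 2) (R := ℚ) (MvPowerSeries.X 0) = 0 :=
    MvPowerSeries.constantCoeff_X 0
  have hX1 : MvPowerSeries.constantCoeff (σ := Fin 2) (R := ℚ) (MvPowerSeries.X 1) = 0 :=
    MvPowerSeries.constantCoeff_X 1
  -- equations for S Db, S Do
  have hSDb : S Db = MvPowerSeries.X 1 + 2 * (MvPowerSeries.X 0 + MvPowerSeries.X 1) * S Db +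
      MvPowerSeries.X 1 * S Do * S Db := by
    conv_lhs => rw [hDb]
    push_cast [map_add, map_mul, map_ofNat, S_X0, S_X1]
    ring
  have hSDo : S Do = MvPowerSeries.X 0 + 2 * (MvPowerSeries.X 0 + MvPowerSeries.X 1) * S Do +
      MvPowerSeries.X 0 * S Db * S Do := by
    conv_lhs => rw [hDo]
    push_cast [map_add, map_mul, map_ofNat, S_X0, S_X1]
    ring
  -- uniqueness
  have huv : S Db - Do = 0 ∧ S Do - Db = 0 := by
    apply uniq_pair (S Db - Do) (S Do - Db)
      (2 * (MvPowerSeries.X 0 + MvPowerSeries.X 1) + MvPowerSeries.X 1 * S Do)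
      (MvPowerSeries.X 1 * Do)
      (MvPowerSeries.X 0 * Db)
      (2 * (MvPowerSeries.X 0 + MvPowerSeries.X 1) + MvPowerSeries.X 0 * S Db)
    · simp [map_add, map_mul, hX0, hX1]
    · simp [map_mul, hX1]
    · simp [map_mul, hX0]
    · simp [map_add, map_mul, hX0, hX1]
    · linear_combination hSDb - hDo
    · linear_combination hSDo - hDb
  have hDbDo : S Db = Do := sub_eq_zero.mp huv.1
  have hDoDb : S Do = Db := sub_eq_zero.mp huv.2
  -- B equation under S
  have hSB : S B = 1 + 2 * (MvPowerSeries.X 0 + MvPowerSeries.X 1) * S B +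
      (MvPowerSeries.X 0 * Do + MvPowerSeries.X 1 * Db) * S B := by
    conv_lhs => rw [hB]
    push_cast [map_add, map_mul, map_one, map_ofNat, S_X0, S_X1, hDbDo, hDoDb]
    ring
  set U : MvPowerSeries (Fin 2) ℚ :=
    2 * (MvPowerSeries.X 0 + MvPowerSeries.X 1) +
      (MvPowerSeries.X 0 * Do + MvPowerSeries.X 1 * Db) with hU
  have h1 : (1 - U) * B = 1 := by rw [hU]; linear_combination hB
  have h2 : (1 - U) * S B = 1 := by rw [hU]; linear_combination hSB
  have hBS : S B = B := by
    calc S B = ((1 - U) * B) * S B := by rw [h1, one_mul]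
    _ = ((1 - U) * S B) * B := by ring
    _ = B := by rw [h2, one_mul]
  intro a b
  have := coeff_S B (Finsupp.single (0 : Fin 2) a + Finsupp.single 1 b)
  rw [hBS] at this
  rw [this]
  congr 1
  rw [map_add, sw_single, sw_single]
  simp [add_comm]
end

section
/- The series B satisfies the identity B · (1 − D_•·D_∘) = 1 + 2·(D_• + D_∘) + D_•·D_∘ in ℚ⟦t_•, t_∘⟧. -/
/-- The bridge series satisfies `B · (1 − D_•·D_∘) = 1 + 2·(D_• + D_∘) + D_•·D_∘`. -/
theorem motzkin_bridge_series_rational_expression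
    (Db Do B : MvPowerSeries (Fin 2) ℚ)
    (hDb0 : MvPowerSeries.constantCoeff Db = 0)
    (hDo0 : MvPowerSeries.constantCoeff Do = 0)
    (hDb : Db = MvPowerSeries.X 0 + 2 * (MvPowerSeries.X 0 + MvPowerSeries.X 1) * Db +
      MvPowerSeries.X 0 * Do * Db)
    (hDo : Do = MvPowerSeries.X 1 + 2 * (MvPowerSeries.X 0 + MvPowerSeries.X 1) * Do +
      MvPowerSeries.X 1 * Db * Do)
    (hB : B = 1 + 2 * (MvPowerSeries.X 0 + MvPowerSeries.X 1) * B +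
      (MvPowerSeries.X 0 * Do + MvPowerSeries.X 1 * Db) * B) :
    B * (1 - Db * Do) = 1 + 2 * (Db + Do) + Db * Do := by
  have hne : (1 + Db * Do) ≠ 0 := by
    intro h
    have := congrArg (MvPowerSeries.constantCoeff (σ := Fin 2) (R := ℚ)) h
    simp [hDb0, hDo0] at this
  have key : (1 + Db * Do) * (B * (1 - Db * Do) - (1 + 2 * (Db + Do) + Db * Do)) = 0 := by
    linear_combination
      (-(2 : MvPowerSeries (Fin 2) ℚ) * B - Do * B - 2 * Do ^ 2 * B - Db * Do ^ 2 * B) * hDb +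
      (-(2 : MvPowerSeries (Fin 2) ℚ) * B - Db * B - 2 * Db ^ 2 * B - Db ^ 2 * Do * B) * hDo +
      (1 + 2 * Do + 2 * Db + 2 * Db * Do + 2 * Db * Do ^ 2 + 2 * Db ^ 2 * Do + Db ^ 2 * Do ^ 2) * hB
  have := mul_eq_zero.mp key
  rcases this with h | h
  · exact absurd h hne
  · exact sub_eq_zero.mp h
end

section
/- The variables can be recovered rationally from D_• and D_∘: the identities t_• · (1 + 2·D_• + 2·D_∘ + D_•·D_∘) = D_• and t_∘ · (1 + 2·D_• + 2·D_∘ + D_•·D_∘) = D_∘ hold in ℚ⟦t_•, t_∘⟧. -/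
/-- The variables can be recovered rationally from `D_•` and `D_∘`:
`t_• · (1 + 2·D_• + 2·D_∘ + D_•·D_∘) = D_•` and
`t_∘ · (1 + 2·D_• + 2·D_∘ + D_•·D_∘) = D_∘`. -/
theorem motzkin_series_recover_variables
    (Db Do : MvPowerSeries (Fin 2) ℚ)
    (hDb0 : MvPowerSeries.constantCoeff Db = 0)
    (hDo0 : MvPowerSeries.constantCoeff Do = 0)
    (hDb : Db = MvPowerSeries.X 0 + 2 * (MvPowerSeries.X 0 + MvPowerSeries.X 1) * Db +
      MvPowerSeries.X 0 * Do * Db)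
    (hDo : Do = MvPowerSeries.X 1 + 2 * (MvPowerSeries.X 0 + MvPowerSeries.X 1) * Do +
      MvPowerSeries.X 1 * Db * Do) :
    MvPowerSeries.X 0 * (1 + 2 * Db + 2 * Do + Db * Do) = Db ∧
    MvPowerSeries.X 1 * (1 + 2 * Db + 2 * Do + Db * Do) = Do := by
  set u : MvPowerSeries (Fin 2) ℚ := MvPowerSeries.X 0 with hu
  set v : MvPowerSeries (Fin 2) ℚ := MvPowerSeries.X 1 with hv
  have hunit : IsUnit (1 - 2 * (u + v)) := by
    rw [MvPowerSeries.isUnit_iff_constantCoeff]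
    simp [hu, hv]
  have hzero : (1 - 2 * (u + v)) * (v * Db - u * Do) = 0 := by
    linear_combination v * hDb - u * hDo
  have key : v * Db = u * Do := by
    have := (IsUnit.mul_right_eq_zero hunit).mp hzero
    exact sub_eq_zero.mp this
  constructor
  · linear_combination -hDb - 2 * key
  · linear_combination -hDo + 2 * key
end

section
/- In every Motzkin bridge w, the number of even non-horizontal steps equals the number of odd non-horizontal steps: e(w) = o(w). -/
lemma motzkin_aux (w : List ℤ) (hw : ∀ a ∈ w, a = -1 ∨ a = 0 ∨ a = 1) (s : ℤ) :
    ((∑ i ∈ Finset.range w.length,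
        if (w.getD i 0 ≠ 0 ∧ Even (s + (w.take i).sum)) then 1 else 0) : ℕ) +
      (if Even (s + w.sum) then 1 else 0) =
    (∑ i ∈ Finset.range w.length,
        if (w.getD i 0 ≠ 0 ∧ Odd (s + (w.take i).sum)) then 1 else 0) +
      (if Even s then 1 else 0) := by
  induction w generalizing s with
  | nil => simp
  | cons a w ih =>
    have ha : a = -1 ∨ a = 0 ∨ a = 1 := hw a (by simp)
    have hw' : ∀ b ∈ w, b = -1 ∨ b = 0 ∨ b = 1 := fun b hb => hw b (by simp [hb])
    have key := ih hw' (s + a)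
    rw [List.length_cons, Finset.sum_range_succ', Finset.sum_range_succ']
    simp only [List.getD_cons_succ, List.getD_cons_zero, List.take_succ_cons,
      List.take_zero, List.sum_cons, List.sum_nil, add_zero]
    have harr : ∀ t : ℤ, s + (a + t) = (s + a) + t := fun t => by ring
    simp only [harr]
    rcases ha with h | h | h <;> subst h <;>
      simp only [ne_eq, neg_eq_zero, one_ne_zero, not_false_iff, true_and,
        not_true_eq_false, false_and, if_false, zero_add, add_zero,
        Int.even_iff, Int.odd_iff] at key ⊢ <;>
      split_ifs at key ⊢ <;> omega

/-- In every Motzkin bridge `w` (a list of steps in `{−1,0,+1}` with total sum `0`), the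
number of non-horizontal steps at even height equals the number of non-horizontal steps at
odd height: `e(w) = o(w)`. The height of the `i`-th step is the sum of the preceding
steps. -/
theorem motzkin_bridge_even_eq_odd
    (w : List ℤ) (hw : ∀ a ∈ w, a = -1 ∨ a = 0 ∨ a = 1)
    (hbridge : w.sum = 0) :
    ((Finset.range w.length).filter
        (fun i => w.getD i 0 ≠ 0 ∧ Even ((w.take i).sum))).card =
    ((Finset.range w.length).filter
        (fun i => w.getD i 0 ≠ 0 ∧ Odd ((w.take i).sum))).card := by
  have := motzkin_aux w hw 0
  simp only [zero_add, hbridge] at this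
  rw [Finset.card_filter, Finset.card_filter]
  omega
end

section
/- In every primitive Motzkin walk w, the number of even non-horizontal steps exceeds the number of odd non-horizontal steps by exactly one: e(w) = o(w) + 1. -/
private def mg (h : ℤ) : ℤ := if Even h then 1 else -1

private def mcnt (p : ℤ → Prop) [DecidablePred p] : List ℤ → ℤ → ℕ
  | [], _ => 0
  | a :: t, h => (if a ≠ 0 ∧ p h then 1 else 0) + mcnt p t (h + a)

private lemma filter_range_succ (q : ℕ → Prop) [DecidablePred q] (n : ℕ) :
    ((Finset.range (n+1)).filter q).card =
      (if q 0 then 1 else 0) + ((Finset.range n).filter (fun i => q (i+1))).card := by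
  simp only [Finset.card_filter]
  rw [Finset.sum_range_succ']
  ring

private lemma mcnt_eq (p : ℤ → Prop) [DecidablePred p] (w : List ℤ) (h : ℤ) :
    mcnt p w h = ((Finset.range w.length).filter
        (fun i => w.getD i 0 ≠ 0 ∧ p (h + (w.take i).sum))).card := by
  induction w generalizing h with
  | nil => simp [mcnt]
  | cons a t ih =>
    rw [mcnt, List.length_cons, filter_range_succ]
    congr 1
    · simp
    · rw [ih (h + a)]
      congr 1
      apply Finset.filter_congr
      intro i _
      simp [add_assoc]

private lemma mcnt_key (w : List ℤ) (hw : ∀ a ∈ w, a = -1 ∨ a = 0 ∨ a = 1) (h : ℤ) :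
    2 * ((mcnt (fun x => Even x) w h : ℤ) - (mcnt (fun x => Odd x) w h : ℤ)) =
      mg h - mg (h + w.sum) := by
  induction w generalizing h with
  | nil => simp [mcnt]
  | cons a t ih =>
    have ht : ∀ b ∈ t, b = -1 ∨ b = 0 ∨ b = 1 := fun b hb => hw b (List.mem_cons_of_mem _ hb)
    have iht := ih ht (h + a)
    rw [mcnt, mcnt, List.sum_cons, show h + (a + t.sum) = (h + a) + t.sum by ring]
    push_cast
    simp only [mg, Int.even_iff, Int.odd_iff] at iht ⊢
    rcases hw a List.mem_cons_self with rfl | rfl | rfl <;>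
      split_ifs at iht ⊢ <;> omega

/-- In every primitive Motzkin walk `w` (a list of steps in `{−1,0,+1}` with total sum `−1`
all of whose steps start at nonnegative height), the number of non-horizontal steps at even
height exceeds the number of non-horizontal steps at odd height by exactly one:
`e(w) = o(w) + 1`. The height of the `i`-th step is the sum of the preceding steps. -/
theorem primitive_motzkin_even_eq_odd_add_one
    (w : List ℤ) (hw : ∀ a ∈ w, a = -1 ∨ a = 0 ∨ a = 1)
    (hsum : w.sum = -1)
    (hnonneg : ∀ i < w.length, 0 ≤ (w.take i).sum) :
    ((Finset.range w.length).filter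
        (fun i => w.getD i 0 ≠ 0 ∧ Even ((w.take i).sum))).card =
    ((Finset.range w.length).filter
        (fun i => w.getD i 0 ≠ 0 ∧ Odd ((w.take i).sum))).card + 1 := by
  have hE := mcnt_eq (fun x => Even x) w 0
  have hO := mcnt_eq (fun x => Odd x) w 0
  simp only [zero_add] at hE hO
  have hk := mcnt_key w hw 0
  rw [hsum] at hk
  have h1 : mg 0 = 1 := by simp [mg]
  have h2 : mg (0 + -1) = -1 := by
    have : ¬ Even ((0 : ℤ) + -1) := by decide
    simp [mg, this]
  rw [h1, h2] at hk
  rw [← hE, ← hO]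
  omega
end
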